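/- arXiv:1809.01620 — 4 statements merged into one kernel-verified Lean document; each statement's English description precedes it below -/
import Mathlib

section
/- Let f be a natural number, S a finite set of nodes with |S| = 3f+1, F ⊆ S with |F| ≤ f, and V a type of values. Suppose C ⊆ S with |C| ≥ 2f+1 is the set of nodes that committed a value B ∈ V, and let r : S → Option V record the value each node reports in its view-change message, with r x = some B for every x ∈ C \ F. Then for any set W ⊆ S of view-change senders with |W| ≥ 2f+1, there exists x ∈ W with x ∉ F and r x = some B. -/
theorem view_change_preserves_commit
    {α : Type*} [DecidableEq α] {V : Type*} (f : ℕ) (S F C : Finset α)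
    (hS : S.card = 3 * f + 1)
    (hF : F ⊆ S) (hFcard : F.card ≤ f)
    (hC : C ⊆ S) (hCcard : C.card ≥ 2 * f + 1)
    (B : V) (r : α → Option V)
    (hr : ∀ x ∈ C \ F, r x = some B) :
    ∀ W ⊆ S, W.card ≥ 2 * f + 1 → ∃ x ∈ W, x ∉ F ∧ r x = some B := by
  intro W hW hWcard
  have hunion : (W ∪ C).card ≤ 3 * f + 1 := hS ▸ Finset.card_le_card (Finset.union_subset hW hC)
  have hinter : f + 1 ≤ (W ∩ C).card := by
    have := Finset.card_union_add_card_inter W C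
    omega
  have hne : ((W ∩ C) \ F).Nonempty := by
    apply Finset.card_pos.mp
    have := Finset.le_card_sdiff F (W ∩ C)
    omega
  obtain ⟨x, hx⟩ := hne
  simp only [Finset.mem_sdiff, Finset.mem_inter] at hx
  exact ⟨x, hx.1.1, hx.2, hr x (Finset.mem_sdiff.mpr ⟨hx.1.2, hx.2⟩)⟩
end

section
/- Let f be a natural number and let S₀ and S₁ be finite sets of nodes with |S₀| = 3f+1 and |S₁| = 3f+1 such that |S₀ ∩ S₁| ≥ 2f+1 and every node in S₀ ∩ S₁ is honest (i.e., S₀ ∩ S₁ is disjoint from the byzantine set F). Then for any A ⊆ S₀ with |A| ≥ 2f+1 and any B ⊆ S₁ with |B| ≥ 2f+1, there exists an honest node x ∈ A ∩ B ∩ S₀ ∩ S₁. -/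
theorem two_quorum_systems_honest_intersection
    {α : Type*} [DecidableEq α] (f : ℕ) (S₀ S₁ F A B : Finset α)
    (hS₀ : S₀.card = 3 * f + 1) (hS₁ : S₁.card = 3 * f + 1)
    (hInter : (S₀ ∩ S₁).card ≥ 2 * f + 1)
    (hHonest : ∀ x ∈ S₀ ∩ S₁, x ∉ F)
    (hA : A ⊆ S₀) (hAcard : A.card ≥ 2 * f + 1)
    (hB : B ⊆ S₁) (hBcard : B.card ≥ 2 * f + 1) :
    ∃ x, x ∈ A ∧ x ∈ B ∧ x ∈ S₀ ∧ x ∈ S₁ ∧ x ∉ F := by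
  set I := S₀ ∩ S₁ with hI
  have h1 : (A ∪ I).card ≤ S₀.card :=
    Finset.card_le_card (Finset.union_subset hA Finset.inter_subset_left)
  have h2 : (B ∪ I).card ≤ S₁.card :=
    Finset.card_le_card (Finset.union_subset hB Finset.inter_subset_right)
  have e1 := Finset.card_inter_add_card_union A I
  have e2 := Finset.card_inter_add_card_union B I
  have h3 : ((A ∩ I) ∪ (B ∩ I)).card ≤ I.card :=
    Finset.card_le_card (Finset.union_subset Finset.inter_subset_right Finset.inter_subset_right)
  have e3 := Finset.card_inter_add_card_union (A ∩ I) (B ∩ I)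
  have hne : ((A ∩ I) ∩ (B ∩ I)).Nonempty := by
    rw [← Finset.card_pos]; omega
  obtain ⟨x, hx⟩ := hne
  simp only [Finset.mem_inter] at hx
  have hxI : x ∈ S₀ ∩ S₁ := hx.1.2
  rw [Finset.mem_inter] at hxI
  exact ⟨x, hx.1.1, hx.2.1, hxI.1, hxI.2, hHonest x hx.1.2⟩
end

section
/- Let S be a finite set of nodes, ψ : S → ℕ a stake function with total stake Ψ = Σ_{x∈S} ψ(x), and F ⊆ S a byzantine set with Σ_{x∈F} ψ(x) ≤ ⌊Ψ/3⌋. If A, B ⊆ S satisfy Σ_{x∈A} ψ(x) ≥ ⌊2Ψ/3⌋ + 1 and Σ_{x∈B} ψ(x) ≥ ⌊2Ψ/3⌋ + 1, then there exists a node x ∈ A ∩ B with x ∉ F and ψ(x) ≥ 1. -/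
theorem stake_quorum_intersection
    {α : Type*} [DecidableEq α] (S F A B : Finset α) (ψ : α → ℕ)
    (hF : F ⊆ S) (hFstake : ∑ x ∈ F, ψ x ≤ (∑ x ∈ S, ψ x) / 3)
    (hA : A ⊆ S) (hB : B ⊆ S)
    (hAstake : ∑ x ∈ A, ψ x ≥ 2 * (∑ x ∈ S, ψ x) / 3 + 1)
    (hBstake : ∑ x ∈ B, ψ x ≥ 2 * (∑ x ∈ S, ψ x) / 3 + 1) :
    ∃ x ∈ A ∩ B, x ∉ F ∧ ψ x ≥ 1 := by
  set Ψ := ∑ x ∈ S, ψ x with hΨ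
  have hunion : ∑ x ∈ A ∪ B, ψ x ≤ Ψ := Finset.sum_le_sum_of_subset (Finset.union_subset hA hB)
  have hiu : ∑ x ∈ A ∪ B, ψ x + ∑ x ∈ A ∩ B, ψ x = ∑ x ∈ A, ψ x + ∑ x ∈ B, ψ x :=
    Finset.sum_union_inter
  have hdiff : ∑ x ∈ (A ∩ B) ∩ F, ψ x + ∑ x ∈ (A ∩ B) \ F, ψ x = ∑ x ∈ A ∩ B, ψ x :=
    Finset.sum_inter_add_sum_sdiff (A ∩ B) F ψ
  have hIF : ∑ x ∈ (A ∩ B) ∩ F, ψ x ≤ ∑ x ∈ F, ψ x :=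
    Finset.sum_le_sum_of_subset (Finset.inter_subset_right)
  have hpos : 0 < ∑ x ∈ (A ∩ B) \ F, ψ x := by omega
  obtain ⟨x, hx, hψ⟩ : ∃ x ∈ (A ∩ B) \ F, 0 < ψ x := by
    by_contra h
    push_neg at h
    have : ∑ x ∈ (A ∩ B) \ F, ψ x = 0 := Finset.sum_eq_zero fun x hx => Nat.le_zero.mp (h x hx)
    omega
  rw [Finset.mem_sdiff] at hx
  exact ⟨x, hx.1, hx.2, hψ⟩
end

section
/- Let S be a finite set of nodes, ψ : S → ℕ a stake function with total stake Ψ = Σ_{x∈S} ψ(x), F ⊆ S with Σ_{x∈F} ψ(x) ≤ ⌊Ψ/3⌋, and V a type of values. Let h : S → Option V record the (at most one) value committed by each honest node. If A, B ⊆ S satisfy Σ_{x∈A} ψ(x) ≥ ⌊2Ψ/3⌋ + 1 and Σ_{x∈B} ψ(x) ≥ ⌊2Ψ/3⌋ + 1, and there are values a, b ∈ V such that h x = some a for every x ∈ A \ F with ψ(x) ≥ 1, and h x = some b for every x ∈ B \ F with ψ(x) ≥ 1, then a = b. -/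
theorem stake_within_view_agreement
    {α : Type*} [DecidableEq α] {V : Type*} (S F A B : Finset α) (ψ : α → ℕ)
    (h : α → Option V)
    (hF : F ⊆ S) (hFstake : ∑ x ∈ F, ψ x ≤ (∑ x ∈ S, ψ x) / 3)
    (hA : A ⊆ S) (hB : B ⊆ S)
    (hAstake : ∑ x ∈ A, ψ x ≥ 2 * (∑ x ∈ S, ψ x) / 3 + 1)
    (hBstake : ∑ x ∈ B, ψ x ≥ 2 * (∑ x ∈ S, ψ x) / 3 + 1)
    (a b : V)
    (hAa : ∀ x ∈ A \ F, ψ x ≥ 1 → h x = some a)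
    (hBb : ∀ x ∈ B \ F, ψ x ≥ 1 → h x = some b) :
    a = b := by
  have hUn : ∑ x ∈ A ∪ B, ψ x ≤ ∑ x ∈ S, ψ x :=
    Finset.sum_le_sum_of_subset (Finset.union_subset hA hB)
  have hkey : ∑ x ∈ A ∪ B, ψ x + ∑ x ∈ A ∩ B, ψ x = ∑ x ∈ A, ψ x + ∑ x ∈ B, ψ x :=
    Finset.sum_union_inter
  have hsplit : ∑ x ∈ (A ∩ B) ∩ F, ψ x + ∑ x ∈ (A ∩ B) \ F, ψ x = ∑ x ∈ A ∩ B, ψ x :=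
    Finset.sum_inter_add_sum_sdiff (A ∩ B) F ψ
  have hIF : ∑ x ∈ (A ∩ B) ∩ F, ψ x ≤ ∑ x ∈ F, ψ x :=
    Finset.sum_le_sum_of_subset (Finset.inter_subset_right)
  have hpos : ∑ x ∈ (A ∩ B) \ F, ψ x ≠ 0 := by omega
  obtain ⟨x, hx, hxψ⟩ := Finset.exists_ne_zero_of_sum_ne_zero hpos
  have hxA : x ∈ A \ F := by
    simp only [Finset.mem_sdiff, Finset.mem_inter] at hx ⊢; tauto
  have hxB : x ∈ B \ F := by
    simp only [Finset.mem_sdiff, Finset.mem_inter] at hx ⊢; tauto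
  have h1 := hAa x hxA (by omega)
  have h2 := hBb x hxB (by omega)
  rw [h1] at h2
  exact Option.some_injective _ h2
end
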